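/- Let A be a real symmetric positive definite N×N matrix. Then the Fourier transform of x ↦ e^{-xᵀAx} is ξ ↦ (π^N / det A)^{1/2} e^{-π² ξᵀ A^{-1} ξ}, where the Fourier transform is defined by F(f)(ξ) = ∫_{ℝᴺ} e^{-2πi xᵀξ} f(x) dx. -/

import Mathlib

open Matrix MeasureTheory

theorem stmt4 {N : ℕ} (A : Matrix (Fin N) (Fin N) ℝ) (hA : A.PosDef)
    (ξ : Fin N → ℝ) :
    ∫ x : Fin N → ℝ,
        Complex.exp (-2 * Real.pi * Complex.I * ((x ⬝ᵥ ξ : ℝ) : ℂ)) *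
          ((Real.exp (-(x ⬝ᵥ A.mulVec x)) : ℝ) : ℂ)
      = ((Real.sqrt (Real.pi ^ N / A.det) : ℝ) : ℂ) *
          ((Real.exp (-(Real.pi ^ 2) * (ξ ⬝ᵥ A⁻¹.mulVec ξ)) : ℝ) : ℂ) := by
  classical
  open MatrixOrder in
  set B := CFC.sqrt A with hBdef
  open MatrixOrder in
  have hB : B.PosSemidef := (CFC.sqrt_nonneg A).posSemidef
  open MatrixOrder in
  have hBB : B * B = A := CFC.sqrt_mul_sqrt_self A hA.posSemidef.nonneg
  have hBsym : Bᵀ = B := by simpa [Matrix.IsSymm] using hB.isHermitian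
  have hdetB : B.det * B.det = A.det := by rw [← Matrix.det_mul, hBB]
  have hdetBnn : 0 ≤ B.det := by
    rw [hB.isHermitian.det_eq_prod_eigenvalues]
    apply Finset.prod_nonneg
    intro i _
    simpa using hB.eigenvalues_nonneg i
  have hdetApos : 0 < A.det := hA.det_pos
  have hdetBpos : 0 < B.det := by
    rcases hdetBnn.lt_or_eq with h | h
    · exact h
    · exfalso; rw [← h] at hdetB; simp at hdetB; linarith [hdetB ▸ hdetApos]
  have hdetB0 : B.det ≠ 0 := hdetBpos.ne'
  haveI : Invertible B := B.invertibleOfIsUnitDet hdetB0.isUnit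
  have hBi : B * B⁻¹ = 1 := Matrix.mul_nonsing_inv B hdetB0.isUnit
  have hBinvsym : (B⁻¹)ᵀ = B⁻¹ := by rw [Matrix.transpose_nonsing_inv, hBsym]
  set η := B⁻¹ *ᵥ ξ with hη
  have key1 : ∀ x : Fin N → ℝ, (B *ᵥ x) ⬝ᵥ η = x ⬝ᵥ ξ := by
    intro x
    rw [hη, Matrix.dotProduct_mulVec, ← Matrix.vecMul_transpose, Matrix.vecMul_vecMul,
      hBsym, hBi, Matrix.vecMul_one]
  have key2 : ∀ x : Fin N → ℝ, x ⬝ᵥ A *ᵥ x = (B *ᵥ x) ⬝ᵥ (B *ᵥ x) := by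
    intro x
    rw [← hBB, ← Matrix.mulVec_mulVec, Matrix.dotProduct_mulVec, ← Matrix.mulVec_transpose, hBsym]
  have key3 : η ⬝ᵥ η = ξ ⬝ᵥ A⁻¹ *ᵥ ξ := by
    rw [hη, Matrix.dotProduct_mulVec, ← Matrix.vecMul_transpose, Matrix.vecMul_vecMul, hBinvsym,
      ← Matrix.mul_inv_rev, hBB, ← Matrix.dotProduct_mulVec]
  set g : (Fin N → ℝ) → ℂ := fun y =>
    Complex.exp (-2 * Real.pi * Complex.I * ((y ⬝ᵥ η : ℝ) : ℂ)) *
      ((Real.exp (-(y ⬝ᵥ y)) : ℝ) : ℂ) with hg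
  have hL : (∫ x : Fin N → ℝ,
        Complex.exp (-2 * Real.pi * Complex.I * ((x ⬝ᵥ ξ : ℝ) : ℂ)) *
          ((Real.exp (-(x ⬝ᵥ A.mulVec x)) : ℝ) : ℂ)) = ∫ x : Fin N → ℝ, g (B *ᵥ x) := by
    congr 1
    funext x
    rw [hg]
    simp only [key1 x]
    rw [show (B *ᵥ x) ⬝ᵥ (B *ᵥ x) = x ⬝ᵥ A *ᵥ x from (key2 x).symm]
  set L : (Fin N → ℝ) ≃ₗ[ℝ] (Fin N → ℝ) := B.toLinearEquiv' ‹Invertible B› with hLdef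
  set e : (Fin N → ℝ) ≃ᵐ (Fin N → ℝ) :=
    L.toContinuousLinearEquiv.toHomeomorph.toMeasurableEquiv with hedef
  have hcoe : ⇑e = ⇑(Matrix.toLin' B) := rfl
  have hmap : (volume : Measure (Fin N → ℝ)).map e = ENNReal.ofReal |(B.det)⁻¹| • volume := by
    rw [hcoe]
    have h1 := Measure.map_linearMap_addHaar_eq_smul_addHaar (μ := volume)
      (f := Matrix.toLin' B) (by rw [LinearMap.det_toLin']; exact hdetB0)
    rw [LinearMap.det_toLin'] at h1
    exact h1
  have happ : ∀ x, e x = B *ᵥ x := fun x => rfl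
  have hTint : (∫ x : Fin N → ℝ, g (B *ᵥ x)) = (B.det)⁻¹ • ∫ y, g y := by
    calc ∫ x : Fin N → ℝ, g (B *ᵥ x) = ∫ x, g (e x) := by simp_rw [happ]
    _ = ∫ y, g y ∂((volume : Measure (Fin N → ℝ)).map e) :=
        (MeasureTheory.integral_map_equiv e g).symm
    _ = ∫ y, g y ∂(ENNReal.ofReal |(B.det)⁻¹| • volume) := by rw [hmap]
    _ = |(B.det)⁻¹| • ∫ y, g y := by
        rw [integral_smul_measure, ENNReal.toReal_ofReal (abs_nonneg _)]
    _ = (B.det)⁻¹ • ∫ y, g y := by rw [abs_of_pos (inv_pos.mpr hdetBpos)]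
  set ηe : EuclideanSpace ℝ (Fin N) := (EuclideanSpace.equiv (Fin N) ℝ).symm η with hηe
  have hEuc : (∫ y : Fin N → ℝ, g y)
      = FourierTransform.fourier (fun v : EuclideanSpace ℝ (Fin N) => Complex.exp (-(1:ℂ) * (‖v‖:ℂ)^2)) ηe := by
    rw [Real.fourier_eq']
    rw [← (EuclideanSpace.volume_preserving_symm_measurableEquiv_toLp (Fin N)).integral_comp
      (MeasurableEquiv.toLp 2 (Fin N → ℝ)).symm.measurableEmbedding g]
    congr 1
    funext v
    rw [hg]
    beta_reduce
    have h1 : (MeasurableEquiv.toLp 2 (Fin N → ℝ)).symm v ⬝ᵥ η = inner ℝ v ηe := by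
      simp [dotProduct, PiLp.inner_apply, hηe,
        EuclideanSpace.equiv, mul_comm]
    have h2 : (MeasurableEquiv.toLp 2 (Fin N → ℝ)).symm v ⬝ᵥ
        (MeasurableEquiv.toLp 2 (Fin N → ℝ)).symm v = ‖v‖^2 := by
      rw [EuclideanSpace.real_norm_sq_eq]
      simp [dotProduct, PiLp.inner_apply, sq]
    rw [h1, h2, smul_eq_mul]
    congr 1
    · push_cast; ring_nf
    · rw [← Complex.ofReal_pow]
      push_cast [Complex.ofReal_exp]
      ring_nf
  have hFour := fourier_gaussian_innerProductSpace
    (V := EuclideanSpace ℝ (Fin N)) (b := 1) (by norm_num) ηe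
  have hnorm : (‖ηe‖:ℝ)^2 = ξ ⬝ᵥ A⁻¹ *ᵥ ξ := by
    rw [← key3, EuclideanSpace.real_norm_sq_eq]
    simp [hηe, PiLp.inner_apply, dotProduct, EuclideanSpace.equiv, sq]
  have hsqrtA : Real.sqrt A.det = B.det := by
    rw [← hdetB]; exact Real.sqrt_mul_self hdetBnn
  have hpow : ((Real.pi:ℂ)/1) ^ ((Module.finrank ℝ (EuclideanSpace ℝ (Fin N)) : ℂ)/2)
      = ((Real.sqrt (Real.pi^N) : ℝ) : ℂ) := by
    rw [div_one, finrank_euclideanSpace_fin]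
    have h : ((N:ℂ)/2) = (((N/2 : ℝ)) : ℂ) := by push_cast; ring
    rw [h, ← Complex.ofReal_cpow Real.pi_nonneg]
    congr 1
    rw [Real.sqrt_eq_rpow, ← Real.rpow_natCast Real.pi N, ← Real.rpow_mul Real.pi_nonneg]
    ring_nf
  rw [hL, hTint, hEuc, hFour, hpow,
    show -(Real.pi:ℂ)^2 * (‖ηe‖:ℂ)^2 / 1 = ((-(Real.pi^2) * (ξ ⬝ᵥ A⁻¹ *ᵥ ξ) : ℝ) : ℂ) by
      push_cast [← hnorm]; ring,
    ← Complex.ofReal_exp, Complex.real_smul,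
    show Real.sqrt (Real.pi ^ N / A.det) = B.det⁻¹ * Real.sqrt (Real.pi^N) by
      rw [Real.sqrt_div (by positivity) A.det, hsqrtA]; ring]
  push_cast
  ring
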